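/- Spectrum of an equilateral star-shaped graph: let n ≥ 2 and ℓ > 0. Then the set of λ ∈ ℝ for which there exists a nonzero pair (α, β) ∈ ℝ × ℝ^n satisfying λ(α + β_i) = β_i/ℓ for all 1 ≤ i ≤ n and λ α = −(1/ℓ) ∑_{i=1}^n β_i, equals {0, 1/ℓ, (1+n)/ℓ}. -/

import Mathlib

/-- **Spectrum of an equilateral star-shaped graph**: for `n ≥ 2` edges all of the same
length `ℓ > 0`, the set of `λ ∈ ℝ` admitting a nonzero piecewise-affine eigenfunction —
encoded by `(α, β)` where the eigenfunction equals `α + t βᵢ` on the `i`-th edge, with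
eigenvalue equations `λ(α + βᵢ) = βᵢ/ℓ` at each endpoint and `λ α = −(1/ℓ) ∑ᵢ βᵢ` at the
center — is exactly `{0, 1/ℓ, (1+n)/ℓ}`. -/
theorem star_graph_spectrum (n : ℕ) (hn : 2 ≤ n) (ℓ : ℝ) (hℓ : 0 < ℓ) :
    { lam : ℝ | ∃ (α : ℝ) (β : Fin n → ℝ), (α, β) ≠ 0 ∧
        (∀ i, lam * (α + β i) = β i / ℓ) ∧ lam * α = -(1 / ℓ) * ∑ i, β i } =
      {0, 1 / ℓ, (1 + n) / ℓ} := by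
  have hℓ' : (ℓ : ℝ) ≠ 0 := ne_of_gt hℓ
  ext lam
  simp only [Set.mem_setOf_eq, Set.mem_insert_iff, Set.mem_singleton_iff]
  constructor
  · rintro ⟨α, β, hne, h1, h2⟩
    by_cases hl0 : lam = 0
    · exact Or.inl hl0
    by_cases hl1 : lam = 1 / ℓ
    · exact Or.inr (Or.inl hl1)
    right; right
    have hkey : ∀ i, β i * (1 - lam * ℓ) = lam * ℓ * α := by
      intro i
      have := h1 i
      field_simp at this
      nlinarith [this]
    have hden : (1 - lam * ℓ) ≠ 0 := by
      intro h
      apply hl1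
      field_simp
      linarith
    have hβ : ∀ i, β i = lam * ℓ * α / (1 - lam * ℓ) := by
      intro i
      field_simp
      exact hkey i
    have hsum : ∑ i, β i = n * (lam * ℓ * α / (1 - lam * ℓ)) := by
      rw [Finset.sum_congr rfl fun i _ => hβ i]
      simp [Finset.sum_const, mul_comm]
    have hα : α ≠ 0 := by
      intro h0
      apply hne
      have hb : β = 0 := by
        funext i; simp [hβ i, h0]
      rw [h0, hb]; rfl
    rw [hsum] at h2
    have h3 : lam * α * (1 - lam * ℓ) = -n * (lam * ℓ * α) / ℓ := by
      field_simp at h2 ⊢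
      nlinarith [h2]
    have h4 : lam * α * (1 - lam * ℓ + n) = 0 := by
      field_simp at h3
      rw [show (1 - lam * ℓ + n : ℝ) = 0 by linarith, mul_zero]
    have h5 : 1 - lam * ℓ + n = 0 := by
      rcases mul_eq_zero.1 h4 with h | h
      · rcases mul_eq_zero.1 h with h | h
        · exact absurd h hl0
        · exact absurd h hα
      · exact h
    field_simp
    linarith
  · rintro (rfl | rfl | rfl)
    · exact ⟨1, 0, by simp, by simp, by simp⟩
    · refine ⟨0, fun i => if i = ⟨0, by omega⟩ then 1 else if i = ⟨1, by omega⟩ then -1 else 0,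
        ?_, ?_, ?_⟩
      · intro h
        have := congrArg (fun p => p.2 ⟨0, by omega⟩) h
        simp at this
      · intro i
        by_cases h0 : i = ⟨0, by omega⟩ <;> by_cases h1 : i = ⟨1, by omega⟩ <;>
          simp [h0, h1] <;> field_simp
      · have hne01 : (⟨0, by omega⟩ : Fin n) ≠ ⟨1, by omega⟩ := by
          simp [Fin.ext_iff]
        have hsum : ∑ i : Fin n, (if i = ⟨0, by omega⟩ then (1:ℝ) else if i = ⟨1, by omega⟩ then -1 else 0) = 0 := by
          have : ∀ i : Fin n, (if i = ⟨0, by omega⟩ then (1:ℝ) else if i = ⟨1, by omega⟩ then -1 else 0)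
              = (if i = ⟨0, by omega⟩ then (1:ℝ) else 0) + (if i = ⟨1, by omega⟩ then -1 else 0) := by
            intro i
            by_cases h0 : i = ⟨0, by omega⟩ <;> by_cases h1 : i = ⟨1, by omega⟩ <;>
              simp_all
          rw [Finset.sum_congr rfl fun i _ => this i, Finset.sum_add_distrib]
          simp
        rw [hsum]
        simp
    · refine ⟨1, fun _ => -(1 + n) / n, ?_, ?_, ?_⟩
      · intro h
        have := congrArg Prod.fst h
        simp at this
      · intro i
        have hn' : (n:ℝ) ≠ 0 := by positivity
        field_simp
        ring
      · have hn' : (n:ℝ) ≠ 0 := by positivity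
        simp [Finset.sum_const]
        field_simp
        ring
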